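/- Let G be an infinite profinite group with a strictly decreasing sequence G = F₀ > F₁ > F₂ > ... of open (hence finite index) subgroups, F_∞ = ⋂ₙ Fₙ, and A = ⋃_{n≥1} (F_{2n-1} \ F_{2n}). Then Per(χ_A) = {t ∈ G : At⁻¹ = A} equals F_∞; in particular A is not periodic since F_∞ has infinite index. -/

import Mathlib

open Pointwise

theorem stmt14 {G : Type*} [Group G] [TopologicalSpace G] [IsTopologicalGroup G]
    [CompactSpace G] [T2Space G] [TotallyDisconnectedSpace G] [Infinite G]
    (F : ℕ → Subgroup G) (hopen : ∀ n : ℕ, IsOpen (F n : Set G))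
    (htop : F 0 = ⊤) (hdec : ∀ n : ℕ, F (n + 1) < F n) :
    {t : G | (fun a => a * t⁻¹) ''
        (⋃ n : ℕ, ((F (2 * n + 1) : Set G) \ (F (2 * n + 2) : Set G))) =
      ⋃ n : ℕ, ((F (2 * n + 1) : Set G) \ (F (2 * n + 2) : Set G))} =
        ((⨅ n : ℕ, F n : Subgroup G) : Set G) ∧
      ¬(⨅ n : ℕ, F n).FiniteIndex := by
  set A : Set G := ⋃ n : ℕ, ((F (2 * n + 1) : Set G) \ (F (2 * n + 2) : Set G)) with hA
  have hanti : Antitone F := antitone_nat_of_succ_le fun n => (hdec n).le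
  -- key lemma about membership in A
  have memA : ∀ (y : G) (j : ℕ), y ∈ F j → y ∉ F (j + 1) → (y ∈ A ↔ Odd j) := by
    intro y j hyj hyj1
    constructor
    · intro hy
      rw [hA, Set.mem_iUnion] at hy
      obtain ⟨m, hm1, hm2⟩ := hy
      have h1 : 2 * m + 1 ≤ j := by
        by_contra h
        push_neg at h
        exact hyj1 (hanti (by omega) hm1)
      have h2 : j < 2 * m + 2 := by
        by_contra h
        push_neg at h
        exact hm2 (hanti h hyj)
      have : j = 2 * m + 1 := by omega
      exact ⟨m, by omega⟩
    · rintro ⟨m, hm⟩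
      rw [hA, Set.mem_iUnion]
      exact ⟨m, by rw [show 2 * m + 1 = j by omega]; exact hyj,
        by rw [show 2 * m + 2 = j + 1 by omega]; exact hyj1⟩
  constructor
  · ext t
    simp only [Set.mem_setOf_eq, SetLike.mem_coe, Subgroup.mem_iInf]
    constructor
    · -- if A t⁻¹ = A then t ∈ every F n
      intro h
      have key : ∀ y : G, y * t ∈ A ↔ y ∈ A := by
        intro y
        constructor
        · intro hy
          have : (y * t) * t⁻¹ ∈ (fun a => a * t⁻¹) '' A := ⟨y * t, hy, rfl⟩
          rw [h] at this
          simpa using this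
        · intro hy
          rw [← h] at hy
          obtain ⟨a, ha, hae⟩ := hy
          have : a = y * t := by
            rw [← hae]; group
          rwa [← this]
      by_contra hcon
      push_neg at hcon
      obtain ⟨m, hm⟩ := hcon
      -- least n₀ with t ∉ F (n₀+1)
      classical
      have hex : ∃ n, t ∉ F (n + 1) := by
        rcases m with _ | k
        · exact absurd (htop ▸ Subgroup.mem_top t) hm
        · exact ⟨k, hm⟩
      set n₀ := Nat.find hex with hn₀
      have ht1 : t ∉ F (n₀ + 1) := Nat.find_spec hex
      have ht0 : t ∈ F n₀ := by
        rcases Nat.eq_zero_or_pos n₀ with h0 | h0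
        · rw [h0, htop]; exact Subgroup.mem_top t
        · obtain ⟨k, hk⟩ := Nat.exists_eq_succ_of_ne_zero h0.ne'
          have := Nat.find_min hex (m := k) (by omega)
          rw [hk]
          simpa using this
      obtain ⟨x, hx1, hx2⟩ := SetLike.exists_of_lt (hdec (n₀ + 1))
      have hxt1 : x * t ∈ F n₀ := mul_mem (hanti (by omega) hx1) ht0
      have hxt2 : x * t ∉ F (n₀ + 1) := by
        intro hc
        exact ht1 (by simpa using mul_mem (inv_mem hx1) hc)
      have e1 := memA x (n₀ + 1) hx1 hx2
      have e2 := memA (x * t) n₀ hxt1 hxt2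
      have := (key x).symm.trans e2
      rw [e1] at this
      rw [Nat.odd_add_one] at this
      tauto
    · -- if t ∈ every F n then A t⁻¹ = A
      intro ht
      ext y
      constructor
      · rintro ⟨a, ha, rfl⟩
        rw [hA, Set.mem_iUnion] at ha ⊢
        obtain ⟨m, h1, h2⟩ := ha
        refine ⟨m, mul_mem h1 (inv_mem (ht _)), fun hc => h2 ?_⟩
        simpa using mul_mem hc (ht (2 * m + 2))
      · intro hy
        refine ⟨y * t, ?_, by simp⟩
        rw [hA, Set.mem_iUnion] at hy ⊢
        obtain ⟨m, h1, h2⟩ := hy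
        refine ⟨m, mul_mem h1 (ht _), fun hc => h2 ?_⟩
        simpa using mul_mem hc (inv_mem (ht (2 * m + 2)))
  · -- infinite index
    intro hfi
    have hFI : ∀ n, (F n).FiniteIndex := fun n => by
      haveI := Subgroup.quotient_finite_of_isOpen (F n) (hopen n)
      exact Subgroup.finiteIndex_of_finite_quotient
    have hgrow : ∀ n, n + 1 ≤ (F n).index := by
      intro n
      induction n with
      | zero => exact Nat.one_le_iff_ne_zero.mpr (hFI 0).index_ne_zero
      | succ k ih =>
        have : (F k).index < (F (k + 1)).index :=
          haveI := hFI (k + 1)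
          Subgroup.index_strictAnti (hdec k)
        omega
    have hle : ∀ n, (F n).index ≤ (⨅ n, F n).index := fun n =>
      Subgroup.index_antitone (iInf_le F n)
    have := hle (⨅ n, F n).index
    have := hgrow (⨅ n, F n).index
    omega
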